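/- Let H be a real Hilbert space and let A, B : H ⇉ H be maximally α-comonotone and maximally β-comonotone, respectively, with α + β ≥ 0 and zer(A + B) ≠ ∅. Let γ, δ > 0, λ = 1 + δ/γ, μ = 1 + γ/δ, and suppose that γ + δ ≤ min{2(γ + α), 2(δ + β)}. Let κ ∈ (0, κ̄), where κ̄ := 1 if α + β = 0 and κ̄ := (4(γ + α)(δ + β) − (γ + δ)²)/(2(γ + δ)(α + β)) if α + β > 0. Define J₁ := (Id + γA)^{-1}, J₂ := (Id + δB)^{-1}, R₁ := (1 − λ)Id + λJ₁, R₂ := (1 − μ)Id + μJ₂, T_aDR := (1 − κ)Id + κR₂R₁ (these are single-valued with full domain under the stated hypotheses). Let x₀ ∈ H and x_{k+1} = T_aDR(x_k) for k = 0, 1, 2, …. Then the sequence (x_k) converges weakly to some x⋆ ∈ Fix T_aDR, and the shadow sequence (J₁(x_k)) converges weakly to J₁(x⋆), which belongs to zer(A + B). -/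

import Mathlib

open Filter Topology
open scoped InnerProductSpace Pointwise

theorem quadPSD (A₁ B₁ K E1 E2 P : ℝ) (hA : 0 ≤ A₁) (hB : 0 ≤ B₁) (hK : K^2 ≤ A₁*B₁)
    (hE1 : 0 ≤ E1) (hE2 : 0 ≤ E2) (hP : P^2 ≤ E1*E2) :
    0 ≤ A₁*E1 + B₁*E2 + 2*K*P := by
  have hX : 0 ≤ A₁*E1 + B₁*E2 := by positivity
  have h2 : (2*K*P)^2 ≤ (A₁*E1 + B₁*E2)^2 := by
    nlinarith [sq_nonneg (A₁*E1 - B₁*E2),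
      mul_nonneg (sub_nonneg.2 hK) (mul_nonneg hE1 hE2),
      mul_nonneg (sq_nonneg K) (sub_nonneg.2 hP)]
  nlinarith [h2, hX]

theorem keypoly (γ δ α β c E1 E2 P D1 D2 : ℝ) (hγ : 0 < γ) (hδ : 0 < δ)
    (hc1 : c*(γ+δ) ≤ 2*(γ+α)) (hc2 : c*(γ+δ) ≤ 2*(δ+β))
    (hc3 : (γ+δ)^2*(1-c)^2 ≤ (2*(γ+α)-c*(γ+δ))*(2*(δ+β)-c*(γ+δ)))
    (hE1 : 0 ≤ E1) (hE2 : 0 ≤ E2) (hP : P^2 ≤ E1*E2)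
    (hD1 : (γ+α)*E1 ≤ γ*D1) (hD2 : (δ+β)*E2 ≤ δ*D2) :
    c*((γ+δ)^2*(δ^2*E1 + 2*(γ*δ)*P + γ^2*E2)) ≤
      2*(γ+δ)*(γ*δ^2*D1 + γ^2*δ*D2 + (γ+δ)*(γ*δ)*P) := by
  have hG : 0 < γ + δ := by linarith
  have q := quadPSD (δ^2*(2*(γ+α)-c*(γ+δ))) (γ^2*(2*(δ+β)-c*(γ+δ))) (γ*δ*(γ+δ)*(1-c)) E1 E2 P
    (by nlinarith [sq_nonneg δ]) (by nlinarith [sq_nonneg γ])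
    (by nlinarith [mul_le_mul_of_nonneg_left hc3 (mul_pos (mul_pos hγ hδ) (mul_pos hγ hδ)).le])
    hE1 hE2 hP
  have h1 : 2*(γ+δ)*δ^2*((γ+α)*E1) ≤ 2*(γ+δ)*δ^2*(γ*D1) :=
    mul_le_mul_of_nonneg_left hD1 (by positivity)
  have h2 : 2*(γ+δ)*γ^2*((δ+β)*E2) ≤ 2*(γ+δ)*γ^2*(δ*D2) :=
    mul_le_mul_of_nonneg_left hD2 (by positivity)
  have h3 : 0 ≤ (γ+δ)*(δ^2*(2*(γ+α)-c*(γ+δ))*E1 + γ^2*(2*(δ+β)-c*(γ+δ))*E2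
      + 2*(γ*δ*(γ+δ)*(1-c))*P) := mul_nonneg hG.le q
  nlinarith [h1, h2, h3]

theorem weak_seq_compact {H : Type*} [NormedAddCommGroup H] [InnerProductSpace ℝ H]
    [CompleteSpace H] (x : ℕ → H) (M : ℝ) (hM : ∀ k, ‖x k‖ ≤ M) :
    ∃ φ : ℕ → ℕ, StrictMono φ ∧ ∃ xs : H,
      ∀ u : H, Tendsto (fun j => ⟪x (φ j), u⟫_ℝ) atTop (𝓝 ⟪xs, u⟫_ℝ) := by
  have hM0 : 0 ≤ M := le_trans (norm_nonneg _) (hM 0)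
  have hc : IsCompact (Set.univ.pi (fun _ : ℕ => Set.Icc (-(M*M)) (M*M))) :=
    isCompact_univ_pi (fun _ => isCompact_Icc)
  have hmem : ∀ k, (fun n => ⟪x k, x n⟫_ℝ) ∈
      (Set.univ.pi (fun _ : ℕ => Set.Icc (-(M*M)) (M*M))) := by
    intro k
    rw [Set.mem_univ_pi]
    intro n
    have h1 : |⟪x k, x n⟫_ℝ| ≤ M * M := by
      refine le_trans (abs_real_inner_le_norm _ _) ?_
      exact mul_le_mul (hM k) (hM n) (norm_nonneg _) hM0
    exact ⟨neg_le_of_abs_le h1, le_of_abs_le h1⟩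
  obtain ⟨g, -, φ, hφ, hconv⟩ := hc.tendsto_subseq hmem
  have hcoord : ∀ n, Tendsto (fun j => ⟪x (φ j), x n⟫_ℝ) atTop (𝓝 (g n)) := by
    intro n
    exact (tendsto_pi_nhds.1 hconv n)
  set K := (Submodule.span ℝ (Set.range x)).topologicalClosure with hK
  have hxK : ∀ k, x k ∈ K :=
    fun k => Submodule.le_topologicalClosure _ (Submodule.subset_span ⟨k, rfl⟩)
  haveI : CompleteSpace K := (Submodule.isClosed_topologicalClosure _).completeSpace_coe
  have hspan : ∀ u ∈ Submodule.span ℝ (Set.range x),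
      ∃ L : ℝ, Tendsto (fun j => ⟪x (φ j), u⟫_ℝ) atTop (𝓝 L) := by
    intro u hu
    induction hu using Submodule.span_induction with
    | mem u hu => obtain ⟨n, rfl⟩ := hu; exact ⟨g n, hcoord n⟩
    | zero => exact ⟨0, by simpa using (tendsto_const_nhds : Tendsto (fun _ : ℕ => (0:ℝ)) _ _)⟩
    | add u v _ _ hu hv =>
        obtain ⟨Lu, hu⟩ := hu; obtain ⟨Lv, hv⟩ := hv
        exact ⟨Lu + Lv, by simpa [inner_add_right] using hu.add hv⟩
    | smul a u _ hu =>
        obtain ⟨L, hL⟩ := hu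
        exact ⟨a * L, by simpa [real_inner_smul_right] using hL.const_mul a⟩
  have hcau : ∀ u : H, CauchySeq (fun j => ⟪x (φ j), u⟫_ℝ) := by
    intro u
    have hrepr : ∀ k, ⟪x k, u⟫_ℝ = ⟪x k, (K.orthogonalProjectionOnto u : H)⟫_ℝ := by
      intro k
      have h1 : u - (K.orthogonalProjectionOnto u : H) ∈ Kᗮ :=
        Submodule.sub_starProjection_mem_orthogonal u
      have h2 : ⟪x k, u - (K.orthogonalProjectionOnto u : H)⟫_ℝ = 0 :=
        (Submodule.mem_orthogonal K _).1 h1 (x k) (hxK k)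
      rw [inner_sub_right] at h2
      linarith
    simp_rw [hrepr]
    set w : H := (K.orthogonalProjectionOnto u : H) with hw
    have hwcl : w ∈ closure ((Submodule.span ℝ (Set.range x) : Submodule ℝ H) : Set H) := by
      rw [← Submodule.topologicalClosure_coe]
      exact (K.orthogonalProjectionOnto u).2
    rw [Metric.cauchySeq_iff]
    intro ε hε
    have hε3 : 0 < ε / 3 / (M + 1) := by positivity
    obtain ⟨v, hv, hvd⟩ := Metric.mem_closure_iff.1 hwcl _ hε3
    obtain ⟨L, hL⟩ := hspan v hv
    have hcv : CauchySeq (fun j => ⟪x (φ j), v⟫_ℝ) := hL.cauchySeq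
    obtain ⟨N, hN⟩ := Metric.cauchySeq_iff.1 hcv (ε/3) (by positivity)
    refine ⟨N, fun m hm n hn => ?_⟩
    have key : ∀ j, |⟪x (φ j), w⟫_ℝ - ⟪x (φ j), v⟫_ℝ| ≤ ε/3 := by
      intro j
      rw [← inner_sub_right]
      refine le_trans (abs_real_inner_le_norm _ _) ?_
      have h5 : ‖w - v‖ < ε / 3 / (M+1) := by
        rw [← dist_eq_norm]; exact hvd
      have h6 : ‖x (φ j)‖ * ‖w - v‖ ≤ M * (ε / 3 / (M+1)) :=
        mul_le_mul (hM _) h5.le (norm_nonneg _) hM0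
      refine le_trans h6 ?_
      have hle : M/(M+1) ≤ 1 := by
        rw [div_le_one (by positivity)]; linarith
      calc M * (ε / 3 / (M+1)) = (M/(M+1)) * (ε/3) := by ring
        _ ≤ 1 * (ε/3) := by
            exact mul_le_mul_of_nonneg_right hle (by positivity)
        _ = ε/3 := by ring
    have h7 := hN m hm n hn
    rw [Real.dist_eq] at h7 ⊢
    have h8 := abs_sub_le (⟪x (φ m), w⟫_ℝ) (⟪x (φ m), v⟫_ℝ) (⟪x (φ n), w⟫_ℝ)
    have h9 := abs_sub_le (⟪x (φ m), v⟫_ℝ) (⟪x (φ n), v⟫_ℝ) (⟪x (φ n), w⟫_ℝ)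
    have k1 := key m
    have k2 := key n
    rw [abs_sub_comm] at k2
    linarith
  choose L hL using fun u => cauchySeq_tendsto_of_complete (hcau u)
  have Ladd : ∀ u v, L (u + v) = L u + L v := by
    intro u v
    refine tendsto_nhds_unique (hL (u+v)) ?_
    simpa [inner_add_right] using (hL u).add (hL v)
  have Lsmul : ∀ (a : ℝ) u, L (a • u) = a * L u := by
    intro a u
    refine tendsto_nhds_unique (hL (a • u)) ?_
    simpa [real_inner_smul_right] using (hL u).const_mul a
  have Lbdd : ∀ u, |L u| ≤ M * ‖u‖ := by
    intro u
    have h1 : Tendsto (fun j => |⟪x (φ j), u⟫_ℝ|) atTop (𝓝 |L u|) := (hL u).abs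
    refine le_of_tendsto h1 (Eventually.of_forall fun j => ?_)
    refine le_trans (abs_real_inner_le_norm _ _) ?_
    exact mul_le_mul_of_nonneg_right (hM _) (norm_nonneg _)
  set F : H →ₗ[ℝ] ℝ :=
    { toFun := L, map_add' := Ladd, map_smul' := Lsmul } with hF
  set F' : H →L[ℝ] ℝ := F.mkContinuous M (fun u => by
    rw [Real.norm_eq_abs]; exact Lbdd u) with hF'
  refine ⟨φ, hφ, (InnerProductSpace.toDual ℝ H).symm F', fun u => ?_⟩
  have : ⟪(InnerProductSpace.toDual ℝ H).symm F', u⟫_ℝ = F' u :=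
    InnerProductSpace.toDual_symm_apply
  rw [this]
  exact hL u

theorem extract_of_not_tendsto (f : ℕ → ℝ) (L : ℝ) (h : ¬ Tendsto f atTop (𝓝 L)) :
    ∃ ε > 0, ∃ ψ : ℕ → ℕ, StrictMono ψ ∧ ∀ j, ε ≤ |f (ψ j) - L| := by
  rw [Metric.tendsto_atTop] at h
  push_neg at h
  obtain ⟨ε, hε, hfreq⟩ := h
  obtain ⟨ψ, hψ, hp⟩ := Filter.extraction_of_frequently_atTop
    (Filter.frequently_atTop.2 (fun N => (hfreq N).imp fun n hn => ⟨hn.1, hn.2⟩))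
  exact ⟨ε, hε, ψ, hψ, fun j => by have := hp j; rwa [Real.dist_eq] at this⟩

theorem inner_tendsto_zero {H : Type*} [NormedAddCommGroup H] [InnerProductSpace ℝ H]
    {g f : ℕ → H} {C : ℝ} (hg : ∀ k, ‖g k‖ ≤ C)
    (hf : Tendsto (fun k => ‖f k‖) atTop (𝓝 0)) :
    Tendsto (fun k => ⟪g k, f k⟫_ℝ) atTop (𝓝 0) := by
  have hb : ∀ k, ‖⟪g k, f k⟫_ℝ‖ ≤ C * ‖f k‖ := by
    intro k
    rw [Real.norm_eq_abs]
    refine le_trans (abs_real_inner_le_norm _ _) ?_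
    exact mul_le_mul_of_nonneg_right (hg k) (norm_nonneg _)
  have hlim : Tendsto (fun k => C * ‖f k‖) atTop (𝓝 0) := by
    simpa using hf.const_mul C
  exact squeeze_zero_norm hb hlim

theorem insert_mem {H : Type*} [NormedAddCommGroup H] [InnerProductSpace ℝ H]
    (A : H → Set H) (α : ℝ)
    (hA : ∀ x u y v, u ∈ A x → v ∈ A y → ⟪x - y, u - v⟫_ℝ ≥ α * ‖u - v‖ ^ 2)
    (hAmax : ∀ A' : H → Set H,
      (∀ x u y v, u ∈ A' x → v ∈ A' y → ⟪x - y, u - v⟫_ℝ ≥ α * ‖u - v‖ ^ 2) →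
      (∀ x, A x ⊆ A' x) → ∀ x, A' x = A x)
    (p u : H)
    (hineq : ∀ y a, a ∈ A y → α * ‖u - a‖ ^ 2 ≤ ⟪p - y, u - a⟫_ℝ) : u ∈ A p := by
  classical
  set A' : H → Set H := fun z => if z = p then insert u (A z) else A z with hA'
  have hsub : ∀ z, A z ⊆ A' z := by
    intro z m hm
    simp only [hA']
    split
    · exact Set.mem_insert_of_mem _ hm
    · exact hm
  have hmem' : ∀ z m, m ∈ A' z → m ∈ A z ∨ (z = p ∧ m = u) := by
    intro z m hm
    simp only [hA'] at hm
    split at hm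
    · rcases Set.mem_insert_iff.1 hm with h | h
      · right; exact ⟨by assumption, h⟩
      · left; exact h
    · left; exact hm
  have hco : ∀ x u' y v, u' ∈ A' x → v ∈ A' y → ⟪x - y, u' - v⟫_ℝ ≥ α * ‖u' - v‖ ^ 2 := by
    intro z m w n hm hn
    rcases hmem' z m hm with hm' | ⟨hz, hmu⟩ <;> rcases hmem' w n hn with hn' | ⟨hw, hnu⟩
    · exact hA z m w n hm' hn'
    · rw [hw, hnu]
      have h := hineq z m hm'
      have h1 : ⟪z - p, m - u⟫_ℝ = ⟪p - z, u - m⟫_ℝ := by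
        rw [show z - p = -(p - z) by abel, show m - u = -(u - m) by abel, inner_neg_neg]
      have h2 : ‖m - u‖ = ‖u - m‖ := by rw [norm_sub_rev]
      rw [h1, h2]; exact h
    · rw [hz, hmu]
      exact hineq w n hn'
    · rw [hz, hmu, hw, hnu]
      simp
  have heq := hAmax A' hco hsub p
  have hu : u ∈ A' p := by
    simp only [hA', if_pos rfl]
    exact Set.mem_insert _ _
  rwa [heq] at hu
set_option maxHeartbeats 2000000 in
/-- Weak convergence of the shadow sequence of the adaptive Douglas–Rachford
algorithm for maximally `α`-comonotone `A` and maximally `β`-comonotone `B`. -/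
theorem aDR_shadow_weak_convergence_comonotone {H : Type*} [NormedAddCommGroup H]
    [InnerProductSpace ℝ H] [CompleteSpace H]
    (A B : H → Set H) (α β : ℝ)
    (hA : ∀ x u y v, u ∈ A x → v ∈ A y → ⟪x - y, u - v⟫_ℝ ≥ α * ‖u - v‖ ^ 2)
    (hAmax : ∀ A' : H → Set H,
      (∀ x u y v, u ∈ A' x → v ∈ A' y → ⟪x - y, u - v⟫_ℝ ≥ α * ‖u - v‖ ^ 2) →
      (∀ x, A x ⊆ A' x) → ∀ x, A' x = A x)
    (hB : ∀ x u y v, u ∈ B x → v ∈ B y → ⟪x - y, u - v⟫_ℝ ≥ β * ‖u - v‖ ^ 2)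
    (hBmax : ∀ B' : H → Set H,
      (∀ x u y v, u ∈ B' x → v ∈ B' y → ⟪x - y, u - v⟫_ℝ ≥ β * ‖u - v‖ ^ 2) →
      (∀ x, B x ⊆ B' x) → ∀ x, B' x = B x)
    (hαβ : 0 ≤ α + β)
    (hzer : ∃ w : H, (0 : H) ∈ A w + B w)
    (γ δ lam mu κ : ℝ) (hγ : 0 < γ) (hδ : 0 < δ)
    (hlam : lam = 1 + δ / γ) (hmu : mu = 1 + γ / δ)
    (hcond : γ + δ ≤ min (2 * (γ + α)) (2 * (δ + β)))
    (hκ0 : 0 < κ)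
    (hκ1 : α + β = 0 → κ < 1)
    (hκ2 : 0 < α + β →
      κ < (4 * (γ + α) * (δ + β) - (γ + δ) ^ 2) / (2 * (γ + δ) * (α + β)))
    (J₁ J₂ R₁ R₂ T : H → H)
    (hJ₁ : ∀ z, z - J₁ z ∈ γ • A (J₁ z))
    (hJ₂ : ∀ z, z - J₂ z ∈ δ • B (J₂ z))
    (hR₁ : ∀ z, R₁ z = (1 - lam) • z + lam • J₁ z)
    (hR₂ : ∀ z, R₂ z = (1 - mu) • z + mu • J₂ z)
    (hT : ∀ z, T z = (1 - κ) • z + κ • R₂ (R₁ z))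
    (x : ℕ → H) (hx : ∀ k, x (k + 1) = T (x k)) :
    ∃ xs : H, xs = T xs ∧
      (∀ u : H, Filter.Tendsto (fun k => ⟪x k, u⟫_ℝ) Filter.atTop (nhds ⟪xs, u⟫_ℝ)) ∧
      (∀ u : H,
        Filter.Tendsto (fun k => ⟪J₁ (x k), u⟫_ℝ) Filter.atTop (nhds ⟪J₁ xs, u⟫_ℝ)) ∧
      (0 : H) ∈ A (J₁ xs) + B (J₁ xs) := by
  classical
  have h2a : γ + δ ≤ 2*(γ+α) := le_trans hcond (min_le_left _ _)
  have h2b : γ + δ ≤ 2*(δ+β) := le_trans hcond (min_le_right _ _)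
  have hG : 0 < γ + δ := by linarith
  have hγα : 0 < γ + α := by linarith
  have hδβ : 0 < δ + β := by linarith
  have hlam0 : 0 < lam := by rw [hlam]; positivity
  have hmu0 : 0 < mu := by rw [hmu]; positivity
  have hlamv : lam = (γ+δ)/γ := by rw [hlam]; field_simp; try ring
  have hmuv : mu = (γ+δ)/δ := by rw [hmu]; field_simp; try ring
  have hlamγ : lam * γ = γ + δ := by rw [hlamv]; field_simp
  have hmuδ : mu * δ = γ + δ := by rw [hmuv]; field_simp
  -- resolvent membership and uniqueness for J₁
  have memA : ∀ z : H, γ⁻¹ • (z - J₁ z) ∈ A (J₁ z) := by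
    intro z
    obtain ⟨m, hm, hmeq⟩ := Set.mem_smul_set.mp (hJ₁ z)
    rw [← hmeq, smul_smul, inv_mul_cancel₀ hγ.ne', one_smul]
    exact hm
  have memB : ∀ z : H, δ⁻¹ • (z - J₂ z) ∈ B (J₂ z) := by
    intro z
    obtain ⟨m, hm, hmeq⟩ := Set.mem_smul_set.mp (hJ₂ z)
    rw [← hmeq, smul_smul, inv_mul_cancel₀ hδ.ne', one_smul]
    exact hm
  have uniqJ₁ : ∀ z p : H, γ⁻¹ • (z - p) ∈ A p → p = J₁ z := by
    intro z p hp
    have h1 := hA p (γ⁻¹ • (z - p)) (J₁ z) (γ⁻¹ • (z - J₁ z)) hp (memA z)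
    have he : γ⁻¹ • (z - p) - γ⁻¹ • (z - J₁ z) = γ⁻¹ • (J₁ z - p) := by
      rw [← smul_sub]; congr 1; abel
    rw [he, real_inner_smul_right, norm_smul] at h1
    have h2 : ⟪p - J₁ z, J₁ z - p⟫_ℝ = -‖J₁ z - p‖^2 := by
      rw [show p - J₁ z = -(J₁ z - p) by abel, inner_neg_left, real_inner_self_eq_norm_sq]
    rw [h2] at h1
    have h3 : ‖J₁ z - p‖^2 = 0 := by
      rw [Real.norm_eq_abs, abs_of_pos (inv_pos.2 hγ), mul_pow] at h1
      have h1' : α * (γ⁻¹^2 * ‖J₁ z - p‖^2) ≤ γ⁻¹ * -‖J₁ z - p‖^2 := h1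
      have h2' := mul_le_mul_of_nonneg_left h1' (sq_nonneg γ)
      have eL : γ^2 * (α * (γ⁻¹^2 * ‖J₁ z - p‖^2)) = α * ‖J₁ z - p‖^2 := by
        field_simp
      have eR : γ^2 * (γ⁻¹ * -‖J₁ z - p‖^2) = -(γ * ‖J₁ z - p‖^2) := by
        field_simp
      rw [eL, eR] at h2'
      nlinarith [sq_nonneg ‖J₁ z - p‖]
    have h4 : J₁ z - p = 0 := by
      rw [← norm_eq_zero]
      nlinarith [norm_nonneg (J₁ z - p)]
    rw [← sub_eq_zero, show p - J₁ z = -(J₁ z - p) by abel, h4, neg_zero]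
  have uniqJ₂ : ∀ z p : H, δ⁻¹ • (z - p) ∈ B p → p = J₂ z := by
    intro z p hp
    have h1 := hB p (δ⁻¹ • (z - p)) (J₂ z) (δ⁻¹ • (z - J₂ z)) hp (memB z)
    have he : δ⁻¹ • (z - p) - δ⁻¹ • (z - J₂ z) = δ⁻¹ • (J₂ z - p) := by
      rw [← smul_sub]; congr 1; abel
    rw [he, real_inner_smul_right, norm_smul] at h1
    have h2 : ⟪p - J₂ z, J₂ z - p⟫_ℝ = -‖J₂ z - p‖^2 := by
      rw [show p - J₂ z = -(J₂ z - p) by abel, inner_neg_left, real_inner_self_eq_norm_sq]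
    rw [h2] at h1
    have h3 : ‖J₂ z - p‖^2 = 0 := by
      rw [Real.norm_eq_abs, abs_of_pos (inv_pos.2 hδ), mul_pow] at h1
      have h1' : β * (δ⁻¹^2 * ‖J₂ z - p‖^2) ≤ δ⁻¹ * -‖J₂ z - p‖^2 := h1
      have h2' := mul_le_mul_of_nonneg_left h1' (sq_nonneg δ)
      have eL : δ^2 * (β * (δ⁻¹^2 * ‖J₂ z - p‖^2)) = β * ‖J₂ z - p‖^2 := by
        field_simp
      have eR : δ^2 * (δ⁻¹ * -‖J₂ z - p‖^2) = -(δ * ‖J₂ z - p‖^2) := by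
        field_simp
      rw [eL, eR] at h2'
      nlinarith [sq_nonneg ‖J₂ z - p‖]
    have h4 : J₂ z - p = 0 := by
      rw [← norm_eq_zero]
      nlinarith [norm_nonneg (J₂ z - p)]
    rw [← sub_eq_zero, show p - J₂ z = -(J₂ z - p) by abel, h4, neg_zero]
  have res1 : ∀ z w : H,
      (γ+α) * ‖(z - J₁ z) - (w - J₁ w)‖^2 ≤ γ * ⟪z - w, (z - J₁ z) - (w - J₁ w)⟫_ℝ := by
    intro z w
    have h1 := hA (J₁ z) (γ⁻¹ • (z - J₁ z)) (J₁ w) (γ⁻¹ • (w - J₁ w)) (memA z) (memA w)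
    set e := (z - J₁ z) - (w - J₁ w) with hedef
    have he : γ⁻¹ • (z - J₁ z) - γ⁻¹ • (w - J₁ w) = γ⁻¹ • e := by rw [← smul_sub]
    rw [he, real_inner_smul_right, norm_smul] at h1
    have hpq : J₁ z - J₁ w = (z - w) - e := by rw [hedef]; abel
    rw [hpq, inner_sub_left, real_inner_self_eq_norm_sq] at h1
    rw [Real.norm_eq_abs, abs_of_pos (inv_pos.2 hγ), mul_pow] at h1
    have h1' : α * (γ⁻¹^2 * ‖e‖^2) ≤ γ⁻¹ * (⟪z - w, e⟫_ℝ - ‖e‖^2) := h1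
    have h2' := mul_le_mul_of_nonneg_left h1' (sq_nonneg γ)
    have eL : γ^2 * (α * (γ⁻¹^2 * ‖e‖^2)) = α * ‖e‖^2 := by field_simp
    have eR : γ^2 * (γ⁻¹ * (⟪z - w, e⟫_ℝ - ‖e‖^2)) = γ * ⟪z - w, e⟫_ℝ - γ * ‖e‖^2 := by
      field_simp
    rw [eL, eR] at h2'
    linarith
  have res2 : ∀ z w : H,
      (δ+β) * ‖(z - J₂ z) - (w - J₂ w)‖^2 ≤ δ * ⟪z - w, (z - J₂ z) - (w - J₂ w)⟫_ℝ := by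
    intro z w
    have h1 := hB (J₂ z) (δ⁻¹ • (z - J₂ z)) (J₂ w) (δ⁻¹ • (w - J₂ w)) (memB z) (memB w)
    set e := (z - J₂ z) - (w - J₂ w) with hedef
    have he : δ⁻¹ • (z - J₂ z) - δ⁻¹ • (w - J₂ w) = δ⁻¹ • e := by rw [← smul_sub]
    rw [he, real_inner_smul_right, norm_smul] at h1
    have hpq : J₂ z - J₂ w = (z - w) - e := by rw [hedef]; abel
    rw [hpq, inner_sub_left, real_inner_self_eq_norm_sq] at h1
    rw [Real.norm_eq_abs, abs_of_pos (inv_pos.2 hδ), mul_pow] at h1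
    have h1' : β * (δ⁻¹^2 * ‖e‖^2) ≤ δ⁻¹ * (⟪z - w, e⟫_ℝ - ‖e‖^2) := h1
    have h2' := mul_le_mul_of_nonneg_left h1' (sq_nonneg δ)
    have eL : δ^2 * (β * (δ⁻¹^2 * ‖e‖^2)) = β * ‖e‖^2 := by field_simp
    have eR : δ^2 * (δ⁻¹ * (⟪z - w, e⟫_ℝ - ‖e‖^2)) = δ * ⟪z - w, e⟫_ℝ - δ * ‖e‖^2 := by
      field_simp
    rw [eL, eR] at h2'
    linarith
  -- structural identities
  have I1 : ∀ z, R₁ z = z - lam • (z - J₁ z) := by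
    intro z; rw [hR₁ z]; module
  have I2 : ∀ z, R₂ z = z - mu • (z - J₂ z) := by
    intro z; rw [hR₂ z]; module
  set S : H → H := fun z => R₂ (R₁ z) with hS
  have hTz : ∀ z, T z = z - κ • (z - S z) := by
    intro z; rw [hT z]; simp only [hS]; module
  have hdisp : ∀ z, z - S z = lam • (z - J₁ z) + mu • (R₁ z - J₂ (R₁ z)) := by
    intro z
    have h1 : z - R₁ z = lam • (z - J₁ z) := by rw [I1 z]; module
    have h2 : R₁ z - S z = mu • (R₁ z - J₂ (R₁ z)) := by
      simp only [hS]; rw [I2 (R₁ z)]; module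
    calc z - S z = (z - R₁ z) + (R₁ z - S z) := by abel
      _ = _ := by rw [h1, h2]
  -- the key vector inequality
  have keyvec : ∀ c : ℝ, c*(γ+δ) ≤ 2*(γ+α) → c*(γ+δ) ≤ 2*(δ+β) →
      (γ+δ)^2*(1-c)^2 ≤ (2*(γ+α)-c*(γ+δ))*(2*(δ+β)-c*(γ+δ)) →
      ∀ z w : H,
        c * ‖(z - S z) - (w - S w)‖^2 ≤ 2 * ⟪z - w, (z - S z) - (w - S w)⟫_ℝ := by
    intro c hc1 hc2 hc3 z w
    have hd1 := res1 z w
    have hd2 := res2 (R₁ z) (R₁ w)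
    set e₁ := (z - J₁ z) - (w - J₁ w) with he₁
    set e₂ := (R₁ z - J₂ (R₁ z)) - (R₁ w - J₂ (R₁ w)) with he₂
    have hs' : (z - S z) - (w - S w) = lam • e₁ + mu • e₂ := by
      rw [hdisp z, hdisp w, he₁, he₂]; module
    have hRdiff : R₁ z - R₁ w = (z - w) - lam • e₁ := by
      rw [I1 z, I1 w, he₁]; module
    rw [hRdiff] at hd2
    set E1 := ‖e₁‖^2 with hE1d
    set E2 := ‖e₂‖^2 with hE2d
    set P := ⟪e₁, e₂⟫_ℝ with hPd
    set D1 := ⟪z - w, e₁⟫_ℝ with hD1d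
    set D2 := ⟪z - w, e₂⟫_ℝ with hD2d
    have hd2' : (δ+β)*E2 ≤ δ*(D2 - lam*P) := by
      rw [inner_sub_left, real_inner_smul_left] at hd2
      exact hd2
    have hP : P^2 ≤ E1*E2 := by
      have h := real_inner_mul_inner_self_le e₁ e₂
      rw [real_inner_self_eq_norm_sq, real_inner_self_eq_norm_sq] at h
      rw [hPd, sq]
      exact h
    have kp := keypoly γ δ α β c E1 E2 P D1 (D2 - lam*P) hγ hδ hc1 hc2 hc3
      (sq_nonneg ‖e₁‖) (sq_nonneg ‖e₂‖) hP hd1 hd2'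
    rw [hs']
    have hnorm : ‖lam • e₁ + mu • e₂‖^2 = lam^2*E1 + 2*(lam*mu)*P + mu^2*E2 := by
      rw [norm_add_sq_real, norm_smul, norm_smul, real_inner_smul_left,
        real_inner_smul_right, Real.norm_eq_abs, Real.norm_eq_abs,
        abs_of_pos hlam0, abs_of_pos hmu0, mul_pow, mul_pow]
      ring
    have hip : ⟪z - w, lam • e₁ + mu • e₂⟫_ℝ = lam*D1 + mu*D2 := by
      rw [inner_add_right, real_inner_smul_right, real_inner_smul_right]
    rw [hnorm, hip]
    have h9 : (0:ℝ) < γ^2*δ^2 := by positivity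
    rw [← mul_le_mul_iff_left₀ h9]
    calc c*(lam^2*E1 + 2*(lam*mu)*P + mu^2*E2)*(γ^2*δ^2)
        = c*((γ+δ)^2*(δ^2*E1 + 2*(γ*δ)*P + γ^2*E2)) := by
          rw [hlamv, hmuv]; field_simp
      _ ≤ 2*(γ+δ)*(γ*δ^2*D1 + γ^2*δ*(D2 - lam*P) + (γ+δ)*(γ*δ)*P) := kp
      _ = 2*(lam*D1 + mu*D2)*(γ^2*δ^2) := by
          rw [hlamv, hmuv]; field_simp; ring
  -- choice of the constant c
  obtain ⟨c, hcκ, hc1, hc2, hc3⟩ : ∃ c : ℝ, κ < c ∧ c*(γ+δ) ≤ 2*(γ+α) ∧ c*(γ+δ) ≤ 2*(δ+β) ∧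
      (γ+δ)^2*(1-c)^2 ≤ (2*(γ+α)-c*(γ+δ))*(2*(δ+β)-c*(γ+δ)) := by
    rcases eq_or_lt_of_le hαβ with h0 | h0
    · have hκ := hκ1 h0.symm
      have hβ : β = -α := by linarith
      subst hβ
      have hprod : 0 ≤ (2*(γ+α)-(γ+δ))*(2*(δ+-α)-(γ+δ)) :=
        mul_nonneg (by linarith) (by linarith)
      refine ⟨(κ+1)/2, by linarith, by nlinarith, by nlinarith, ?_⟩
      nlinarith [hprod, hG]
    · have hkb := hκ2 h0
      have hden : 0 < 2*(γ+δ)*(α+β) := by positivity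
      set kb := (4*(γ+α)*(δ+β) - (γ+δ)^2)/(2*(γ+δ)*(α+β)) with hkbdef
      have hkbval : kb * (2*(γ+δ)*(α+β)) = 4*(γ+α)*(δ+β) - (γ+δ)^2 :=
        div_mul_cancel₀ _ hden.ne'
      set c := (κ + kb)/2 with hcdef
      have hckb : c < kb := by rw [hcdef]; linarith
      have hcκ' : κ < c := by rw [hcdef]; linarith
      have hkey : c * (2*(γ+δ)*(α+β)) < 4*(γ+α)*(δ+β) - (γ+δ)^2 := by
        calc c * (2*(γ+δ)*(α+β)) < kb * (2*(γ+δ)*(α+β)) :=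
              mul_lt_mul_of_pos_right hckb hden
          _ = _ := hkbval
      have am1 : 4*(γ+α)*(δ+β) - (γ+δ)^2 ≤ 4*(γ+α)*(α+β) := by
        nlinarith [sq_nonneg ((γ+α)-(δ-α))]
      have am2 : 4*(γ+α)*(δ+β) - (γ+δ)^2 ≤ 4*(δ+β)*(α+β) := by
        nlinarith [sq_nonneg ((δ+β)-(γ-β))]
      have hc1' : c*(γ+δ) ≤ 2*(γ+α) := by nlinarith [hkey, am1, h0, hG]
      have hc2' : c*(γ+δ) ≤ 2*(δ+β) := by nlinarith [hkey, am2, h0, hG]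
      exact ⟨c, hcκ', hc1', hc2', by nlinarith [hkey]⟩
  -- a fixed point obtained from a zero of A + B
  obtain ⟨w0, hw0⟩ := hzer
  rw [Set.mem_add] at hw0
  obtain ⟨a0, ha0, b0, hb0, hab0⟩ := hw0
  set z0 := w0 + γ • a0 with hz0def
  have hz0w0 : z0 - w0 = γ • a0 := by rw [hz0def]; abel
  have hJz0 : J₁ z0 = w0 := by
    refine (uniqJ₁ z0 w0 ?_).symm
    rw [hz0w0, smul_smul, inv_mul_cancel₀ hγ.ne', one_smul]
    exact ha0
  have hR1z0 : R₁ z0 = w0 - δ • a0 := by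
    rw [I1 z0, hJz0, hz0w0, smul_smul, hlamγ, hz0def]
    module
  have hb0' : b0 = -a0 := by
    rw [add_comm] at hab0
    exact eq_neg_of_add_eq_zero_left hab0
  have hJ2R1z0 : J₂ (R₁ z0) = w0 := by
    refine (uniqJ₂ (R₁ z0) w0 ?_).symm
    have h5 : R₁ z0 - w0 = δ • (-a0) := by rw [hR1z0]; module
    rw [h5, smul_smul, inv_mul_cancel₀ hδ.ne', one_smul, ← hb0']
    exact hb0
  have hSz0 : S z0 = z0 := by
    have h6 : z0 - S z0 = lam • (z0 - J₁ z0) + mu • (R₁ z0 - J₂ (R₁ z0)) := hdisp z0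
    rw [hJz0, hJ2R1z0, hR1z0] at h6
    have e1 : lam • (z0 - w0) = (γ+δ) • a0 := by rw [hz0w0, smul_smul, hlamγ]
    have e2 : mu • ((w0 - δ • a0) - w0) = -((γ+δ) • a0) := by
      rw [show (w0 - δ • a0) - w0 = -(δ • a0) by abel, smul_neg, smul_smul, hmuδ]
    rw [e1, e2] at h6
    have h7 : z0 - S z0 = 0 := by rw [h6]; abel
    have h8 := sub_eq_zero.mp h7
    exact h8.symm
  have hTz0 : T z0 = z0 := by rw [hTz z0, hSz0, sub_self, smul_zero, sub_zero]
  -- Fejér monotonicity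
  have fejer : ∀ z : H, S z = z → ∀ k,
      ‖x (k+1) - z‖^2 ≤ ‖x k - z‖^2 - (κ*(c-κ)) * ‖x k - S (x k)‖^2 := by
    intro z hzfix k
    have hkey := keyvec c hc1 hc2 hc3 (x k) z
    rw [hzfix, sub_self, sub_zero] at hkey
    have hstep : x (k+1) - z = (x k - z) - κ • (x k - S (x k)) := by
      rw [hx k, hTz (x k)]; abel
    rw [hstep, norm_sub_sq_real, real_inner_smul_right, norm_smul, Real.norm_eq_abs,
      abs_of_pos hκ0, mul_pow]
    nlinarith [mul_le_mul_of_nonneg_left hkey hκ0.le, sq_nonneg ‖x k - S (x k)‖]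
  have hdecr : ∀ z : H, S z = z → ∀ k, ‖x (k+1) - z‖^2 ≤ ‖x k - z‖^2 := by
    intro z hz k
    have h := fejer z hz k
    nlinarith [h, mul_nonneg (mul_nonneg hκ0.le (by linarith : (0:ℝ) ≤ c - κ))
      (sq_nonneg ‖x k - S (x k)‖)]
  have hanti : ∀ z : H, S z = z → Antitone (fun k => ‖x k - z‖^2) :=
    fun z hz => antitone_nat_of_succ_le (hdecr z hz)
  have normlim : ∀ z : H, S z = z → ∃ l : ℝ, Tendsto (fun k => ‖x k - z‖^2) atTop (𝓝 l) := by
    intro z hz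
    refine ⟨_, tendsto_atTop_ciInf (hanti z hz) ⟨0, ?_⟩⟩
    rintro y ⟨k, rfl⟩
    positivity
  have hρ : 0 < κ*(c-κ) := mul_pos hκ0 (by linarith)
  have hsqz : Tendsto (fun k => ‖x k - S (x k)‖^2) atTop (𝓝 0) := by
    obtain ⟨l, hl⟩ := normlim z0 hSz0
    have h1 : Tendsto (fun k => (‖x k - z0‖^2 - ‖x (k+1) - z0‖^2) / (κ*(c-κ)))
        atTop (𝓝 0) := by
      have h2 : Tendsto (fun k => ‖x (k+1) - z0‖^2) atTop (𝓝 l) :=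
        hl.comp (tendsto_add_atTop_nat 1)
      have h3 := (hl.sub h2).div_const (κ*(c-κ))
      simpa using h3
    refine squeeze_zero (fun k => sq_nonneg _) (fun k => ?_) h1
    rw [le_div_iff₀ hρ]
    nlinarith [fejer z0 hSz0 k]
  have hsz : Tendsto (fun k => ‖x k - S (x k)‖) atTop (𝓝 0) := by
    have h4 : Tendsto (fun k => Real.sqrt (‖x k - S (x k)‖^2)) atTop (𝓝 (Real.sqrt 0)) :=
      (Real.continuous_sqrt.tendsto 0).comp hsqz
    have h5 : (fun k => Real.sqrt (‖x k - S (x k)‖^2)) = fun k => ‖x k - S (x k)‖ :=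
      funext fun k => Real.sqrt_sq (norm_nonneg _)
    rwa [h5, Real.sqrt_zero] at h4
  set M := ‖x 0 - z0‖ + ‖z0‖ with hMdef
  have hbound : ∀ k, ‖x k‖ ≤ M := by
    intro k
    have h1 : ‖x k - z0‖^2 ≤ ‖x 0 - z0‖^2 := hanti z0 hSz0 (Nat.zero_le k)
    have h2 : ‖x k - z0‖ ≤ ‖x 0 - z0‖ := by
      nlinarith [norm_nonneg (x k - z0), norm_nonneg (x 0 - z0)]
    calc ‖x k‖ = ‖(x k - z0) + z0‖ := by rw [sub_add_cancel]
      _ ≤ ‖x k - z0‖ + ‖z0‖ := norm_add_le _ _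
      _ ≤ M := by rw [hMdef]; linarith
  -- weak cluster point of the iterates
  obtain ⟨φ, hφm, xs, hxsφ⟩ := weak_seq_compact x M hbound
  -- S is nonexpansive
  have hc31 : (γ+δ)^2*(1-(1:ℝ))^2 ≤ (2*(γ+α)-1*(γ+δ))*(2*(δ+β)-1*(γ+δ)) := by
    have h := mul_nonneg (by linarith : (0:ℝ) ≤ 2*(γ+α)-(γ+δ))
      (by linarith : (0:ℝ) ≤ 2*(δ+β)-(γ+δ))
    nlinarith [h]
  have hnon : ∀ z w : H, ‖S z - S w‖ ≤ ‖z - w‖ := by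
    intro z w
    have hk := keyvec 1 (by linarith) (by linarith) hc31 z w
    have hid : S z - S w = (z - w) - ((z - S z) - (w - S w)) := by abel
    have hsq : ‖S z - S w‖^2 ≤ ‖z - w‖^2 := by
      rw [hid, norm_sub_sq_real]
      nlinarith [hk]
    nlinarith [norm_nonneg (S z - S w), norm_nonneg (z - w), hsq]
  have hsbound : ∀ k, ‖x k - S (x k)‖ ≤ 2*(M + ‖z0‖) := by
    intro k
    have h1 : ‖S (x k) - z0‖ ≤ ‖x k - z0‖ := by
      have h := hnon (x k) z0
      rwa [hSz0] at h
    have h2 : ‖x k - z0‖ ≤ M + ‖z0‖ := by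
      calc ‖x k - z0‖ ≤ ‖x k‖ + ‖z0‖ := norm_sub_le _ _
        _ ≤ M + ‖z0‖ := by linarith [hbound k]
    calc ‖x k - S (x k)‖ = ‖(x k - z0) - (S (x k) - z0)‖ := by congr 1; abel
      _ ≤ ‖x k - z0‖ + ‖S (x k) - z0‖ := norm_sub_le _ _
      _ ≤ 2*(M + ‖z0‖) := by linarith
  -- demiclosedness
  have demicl : ∀ (ψ : ℕ → ℕ), StrictMono ψ → ∀ q : H,
      (∀ t : H, Tendsto (fun j => ⟪x (ψ j), t⟫_ℝ) atTop (𝓝 ⟪q, t⟫_ℝ)) → S q = q := by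
    intro ψ hψ q hq
    set r := q - S q with hrdef
    have hsψ : Tendsto (fun j => ‖x (ψ j) - S (x (ψ j))‖) atTop (𝓝 0) :=
      hsz.comp hψ.tendsto_atTop
    have hbdd : ∀ j, ‖x (ψ j) - q‖ ≤ M + ‖q‖ := by
      intro j
      calc ‖x (ψ j) - q‖ ≤ ‖x (ψ j)‖ + ‖q‖ := norm_sub_le _ _
        _ ≤ M + ‖q‖ := by linarith [hbound (ψ j)]
    have hineq : ∀ j, ‖r‖^2 ≤
        (-2)*(⟪x (ψ j) - q, r⟫_ℝ - ⟪x (ψ j) - q, x (ψ j) - S (x (ψ j))⟫_ℝ)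
        + (2*⟪r - (x (ψ j) - S (x (ψ j))), x (ψ j) - S (x (ψ j))⟫_ℝ
            + ‖x (ψ j) - S (x (ψ j))‖^2) := by
      intro j
      have h1 : ‖S (x (ψ j)) - S q‖^2 ≤ ‖x (ψ j) - q‖^2 := by
        have h0 := hnon (x (ψ j)) q
        nlinarith [norm_nonneg (S (x (ψ j)) - S q), norm_nonneg (x (ψ j) - q)]
      have e3 : S (x (ψ j)) - S q
          = (x (ψ j) - q) + (r - (x (ψ j) - S (x (ψ j)))) := by rw [hrdef]; abel
      rw [e3, norm_add_sq_real, inner_sub_right] at h1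
      have e4 : ‖r‖^2 = ‖r - (x (ψ j) - S (x (ψ j)))‖^2
          + 2*⟪r - (x (ψ j) - S (x (ψ j))), x (ψ j) - S (x (ψ j))⟫_ℝ
          + ‖x (ψ j) - S (x (ψ j))‖^2 := by
        calc ‖r‖^2 = ‖(r - (x (ψ j) - S (x (ψ j)))) + (x (ψ j) - S (x (ψ j)))‖^2 := by
              rw [sub_add_cancel]
          _ = _ := norm_add_sq_real _ _
      linarith [h1, e4]
    have t1 : Tendsto (fun j => ⟪x (ψ j) - q, r⟫_ℝ) atTop (𝓝 0) := by
      have t1' := (hq r).sub_const ⟪q, r⟫_ℝ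
      rw [sub_self] at t1'
      simpa [inner_sub_left] using t1'
    have t2 : Tendsto (fun j => ⟪x (ψ j) - q, x (ψ j) - S (x (ψ j))⟫_ℝ) atTop (𝓝 0) :=
      inner_tendsto_zero hbdd hsψ
    have t3 : Tendsto
        (fun j => ⟪r - (x (ψ j) - S (x (ψ j))), x (ψ j) - S (x (ψ j))⟫_ℝ) atTop (𝓝 0) := by
      refine inner_tendsto_zero (C := ‖r‖ + 2*(M + ‖z0‖)) (fun j => ?_) hsψ
      calc ‖r - (x (ψ j) - S (x (ψ j)))‖ ≤ ‖r‖ + ‖x (ψ j) - S (x (ψ j))‖ := norm_sub_le _ _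
        _ ≤ ‖r‖ + 2*(M + ‖z0‖) := by linarith [hsbound (ψ j)]
    have t4 : Tendsto (fun j => ‖x (ψ j) - S (x (ψ j))‖^2) atTop (𝓝 0) :=
      hsqz.comp hψ.tendsto_atTop
    have hlim : Tendsto (fun j =>
        (-2)*(⟪x (ψ j) - q, r⟫_ℝ - ⟪x (ψ j) - q, x (ψ j) - S (x (ψ j))⟫_ℝ)
        + (2*⟪r - (x (ψ j) - S (x (ψ j))), x (ψ j) - S (x (ψ j))⟫_ℝ
            + ‖x (ψ j) - S (x (ψ j))‖^2)) atTop (𝓝 0) := by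
      have hcomb := ((t1.sub t2).const_mul (-2)).add ((t3.const_mul 2).add t4)
      simpa using hcomb
    have h9 : ‖r‖^2 ≤ 0 := ge_of_tendsto' hlim hineq
    have hr0 : r = 0 := by
      have h9' : ‖r‖^2 = 0 := le_antisymm h9 (sq_nonneg _)
      have h10 : ‖r‖ = 0 := sq_eq_zero_iff.mp h9'
      rwa [norm_eq_zero] at h10
    rw [hrdef] at hr0
    exact (sub_eq_zero.mp hr0).symm
  have hfixS : S xs = xs := demicl φ hφm xs hxsφ
  have hfixT : xs = T xs := by rw [hTz xs, hfixS, sub_self, smul_zero, sub_zero]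
  -- uniqueness of weak subsequential limits
  have huniq : ∀ (ψ : ℕ → ℕ), StrictMono ψ → ∀ q : H,
      (∀ t, Tendsto (fun j => ⟪x (ψ j), t⟫_ℝ) atTop (𝓝 ⟪q, t⟫_ℝ)) → q = xs := by
    intro ψ hψ q hq
    have hfq : S q = q := demicl ψ hψ q hq
    obtain ⟨l1, hl1⟩ := normlim q hfq
    obtain ⟨l2, hl2⟩ := normlim xs hfixS
    have hinner : ∀ k, ⟪x k, xs - q⟫_ℝ
        = (‖x k - q‖^2 - ‖x k - xs‖^2 + ‖xs‖^2 - ‖q‖^2)/2 := by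
      intro k
      rw [norm_sub_sq_real, norm_sub_sq_real, inner_sub_right]
      ring
    have hts : Tendsto (fun k => ⟪x k, xs - q⟫_ℝ) atTop
        (𝓝 ((l1 - l2 + ‖xs‖^2 - ‖q‖^2)/2)) := by
      simp_rw [hinner]
      exact (((hl1.sub hl2).add_const (‖xs‖^2)).sub_const (‖q‖^2)).div_const 2
    have e1 : ⟪xs, xs - q⟫_ℝ = (l1 - l2 + ‖xs‖^2 - ‖q‖^2)/2 :=
      tendsto_nhds_unique (hxsφ (xs - q)) (hts.comp hφm.tendsto_atTop)
    have e2 : ⟪q, xs - q⟫_ℝ = (l1 - l2 + ‖xs‖^2 - ‖q‖^2)/2 :=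
      tendsto_nhds_unique (hq (xs - q)) (hts.comp hψ.tendsto_atTop)
    have e3 : ‖xs - q‖^2 = 0 := by
      rw [← real_inner_self_eq_norm_sq, inner_sub_left, e1, e2]
      ring
    have e5 : xs - q = 0 := by
      have h5 : ‖xs - q‖ = 0 := sq_eq_zero_iff.mp e3
      rwa [norm_eq_zero] at h5
    exact (sub_eq_zero.mp e5).symm
  -- weak convergence of the whole sequence
  have hxweak : ∀ t : H, Tendsto (fun k => ⟪x k, t⟫_ℝ) atTop (𝓝 ⟪xs, t⟫_ℝ) := by
    intro t
    by_contra hcon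
    obtain ⟨ε, hε, ψ, hψ, hsep⟩ := extract_of_not_tendsto _ _ hcon
    obtain ⟨θ, hθ, q, hqw⟩ := weak_seq_compact (fun j => x (ψ j)) M (fun j => hbound _)
    have hqxs : q = xs := huniq (ψ ∘ θ) (hψ.comp hθ) q hqw
    have hcv : Tendsto (fun j => ⟪x (ψ (θ j)), t⟫_ℝ) atTop (𝓝 ⟪xs, t⟫_ℝ) := by
      have h := hqw t
      rwa [hqxs] at h
    have habs : Tendsto (fun j => |⟪x (ψ (θ j)), t⟫_ℝ - ⟪xs, t⟫_ℝ|) atTop (𝓝 0) := by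
      have h := (hcv.sub_const ⟪xs, t⟫_ℝ).abs
      simpa using h
    have h0' : ε ≤ 0 := ge_of_tendsto' habs (fun j => hsep (θ j))
    linarith
  -- the limit point solves the inclusion
  set us := γ⁻¹ • (xs - J₁ xs) with husdef
  have husA : us ∈ A (J₁ xs) := memA xs
  have hkey1 : R₁ xs - J₂ (R₁ xs) = -((mu⁻¹*lam) • (xs - J₁ xs)) := by
    have h1 : mu • (R₁ xs - J₂ (R₁ xs)) = R₁ xs - S xs := by
      have h := I2 (R₁ xs)
      simp only [hS]
      rw [h]
      module
    have h2 : R₁ xs - S xs = -(lam • (xs - J₁ xs)) := by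
      rw [hfixS, I1 xs]
      module
    have h3 := congrArg (fun y => mu⁻¹ • y) (h1.trans h2)
    simpa [smul_smul, inv_mul_cancel₀ (ne_of_gt hmu0), smul_neg] using h3
  have hJ2fix : J₂ (R₁ xs) = J₁ xs := by
    have hcoef : lam - mu⁻¹*lam = 1 := by
      rw [hlamv, hmuv]
      field_simp
      try ring
    have h4 : J₂ (R₁ xs) = R₁ xs + (mu⁻¹*lam) • (xs - J₁ xs) := by
      rw [← sub_eq_zero]
      have h5 : J₂ (R₁ xs) - (R₁ xs + (mu⁻¹*lam) • (xs - J₁ xs))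
          = -((R₁ xs - J₂ (R₁ xs)) + (mu⁻¹*lam) • (xs - J₁ xs)) := by module
      rw [h5, hkey1]
      simp
    rw [h4, I1 xs]
    have h6 : (xs - lam • (xs - J₁ xs)) + (mu⁻¹*lam) • (xs - J₁ xs)
        = xs - (lam - mu⁻¹*lam) • (xs - J₁ xs) := by module
    rw [h6, hcoef, one_smul]
    abel
  have hBmem : -us ∈ B (J₁ xs) := by
    have h5 := memB (R₁ xs)
    have hcoef2 : δ⁻¹*(mu⁻¹*lam) = γ⁻¹ := by
      rw [hlamv, hmuv]
      field_simp
      try ring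
    have h6 : δ⁻¹ • (R₁ xs - J₂ (R₁ xs)) = -us := by
      rw [hkey1, smul_neg, smul_smul, hcoef2, husdef]
    rw [h6] at h5
    rwa [hJ2fix] at h5
  have hincl : (0:H) ∈ A (J₁ xs) + B (J₁ xs) := by
    rw [Set.mem_add]
    exact ⟨us, husA, -us, hBmem, add_neg_cancel us⟩
  refine ⟨xs, hfixT, hxweak, ?_, hincl⟩
  -- shadow sequence set-up
  obtain ⟨uu, huud⟩ : ∃ uu : ℕ → H, uu = fun k => γ⁻¹ • (x k - J₁ (x k)) := ⟨_, rfl⟩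
  obtain ⟨vv, hvvd⟩ : ∃ vv : ℕ → H, vv = fun k => δ⁻¹ • (R₁ (x k) - J₂ (R₁ (x k))) := ⟨_, rfl⟩
  obtain ⟨qq, hqqd⟩ : ∃ qq : ℕ → H, qq = fun k => J₂ (R₁ (x k)) := ⟨_, rfl⟩
  have huuA : ∀ k, uu k ∈ A (J₁ (x k)) := by
    intro k; rw [huud]; exact memA (x k)
  have hvvB : ∀ k, vv k ∈ B (qq k) := by
    intro k; rw [hvvd, hqqd]; exact memB (R₁ (x k))
  have eγ : ∀ k, γ • uu k = x k - J₁ (x k) := by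
    intro k; rw [huud]; exact smul_inv_smul₀ hγ.ne' _
  have eδ : ∀ k, δ • vv k = R₁ (x k) - J₂ (R₁ (x k)) := by
    intro k; rw [hvvd]; exact smul_inv_smul₀ hδ.ne' _
  have hR1u : ∀ k, R₁ (x k) = x k - (γ+δ) • uu k := by
    intro k
    rw [I1 (x k), ← eγ k, smul_smul, hlamγ]
  have F2 : ∀ k, qq k = J₁ (x k) - δ • (uu k + vv k) := by
    intro k
    have e3 : x k = γ • uu k + J₁ (x k) := by rw [eγ k]; abel
    calc qq k = R₁ (x k) - δ • vv k := by rw [eδ k, hqqd]; simp only []; abel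
      _ = (x k - (γ+δ) • uu k) - δ • vv k := by rw [hR1u k]
      _ = ((γ • uu k + J₁ (x k)) - (γ+δ) • uu k) - δ • vv k := by rw [← e3]
      _ = J₁ (x k) - δ • (uu k + vv k) := by module
  have huv : ∀ k, x k - S (x k) = (γ+δ) • (uu k + vv k) := by
    intro k
    rw [hdisp (x k), ← eγ k, ← eδ k, smul_smul, smul_smul, hlamγ, hmuδ, ← smul_add]
  have hηeq : ∀ k, ‖uu k + vv k‖ = (γ+δ)⁻¹ * ‖x k - S (x k)‖ := by
    intro k
    rw [huv k, norm_smul, Real.norm_eq_abs, abs_of_pos hG]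
    field_simp
  have hη : Tendsto (fun k => ‖uu k + vv k‖) atTop (𝓝 0) := by
    simp_rw [hηeq]
    have h := hsz.const_mul (γ+δ)⁻¹
    simpa using h
  -- bounds
  have hxz : ∀ k, ‖x k - z0‖ ≤ M + ‖z0‖ := by
    intro k
    calc ‖x k - z0‖ ≤ ‖x k‖ + ‖z0‖ := norm_sub_le _ _
      _ ≤ M + ‖z0‖ := by linarith only [hbound k]
  have he1b : ∀ k, ‖(x k - J₁ (x k)) - (z0 - J₁ z0)‖ ≤ γ*(M+‖z0‖)/(γ+α) := by
    intro k
    have h1 := res1 (x k) z0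
    have h2 : ⟪x k - z0, (x k - J₁ (x k)) - (z0 - J₁ z0)⟫_ℝ
        ≤ (M + ‖z0‖) * ‖(x k - J₁ (x k)) - (z0 - J₁ z0)‖ := by
      refine le_trans (real_inner_le_norm _ _) ?_
      exact mul_le_mul_of_nonneg_right (hxz k) (norm_nonneg _)
    set N := ‖(x k - J₁ (x k)) - (z0 - J₁ z0)‖ with hNdef
    rcases eq_or_lt_of_le (norm_nonneg ((x k - J₁ (x k)) - (z0 - J₁ z0))) with h | h
    · rw [← hNdef] at h
      rw [← h]
      positivity
    · rw [← hNdef] at h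
      have h3 : ((γ+α)*N)*N ≤ (γ*(M+‖z0‖))*N := by
        calc ((γ+α)*N)*N = (γ+α)*N^2 := by ring
          _ ≤ γ * ⟪x k - z0, (x k - J₁ (x k)) - (z0 - J₁ z0)⟫_ℝ := h1
          _ ≤ γ*((M + ‖z0‖)*N) := mul_le_mul_of_nonneg_left h2 hγ.le
          _ = (γ*(M+‖z0‖))*N := by ring
      have h4 := le_of_mul_le_mul_right h3 h
      rw [le_div_iff₀ hγα]
      linarith only [h4]
  have hxpb : ∀ k, ‖x k - J₁ (x k)‖ ≤ γ*(M+‖z0‖)/(γ+α) + ‖z0 - J₁ z0‖ := by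
    intro k
    calc ‖x k - J₁ (x k)‖
        = ‖((x k - J₁ (x k)) - (z0 - J₁ z0)) + (z0 - J₁ z0)‖ := by rw [sub_add_cancel]
      _ ≤ ‖(x k - J₁ (x k)) - (z0 - J₁ z0)‖ + ‖z0 - J₁ z0‖ := norm_add_le _ _
      _ ≤ γ*(M+‖z0‖)/(γ+α) + ‖z0 - J₁ z0‖ := by linarith only [he1b k]
  set Cu := γ⁻¹*(γ*(M+‖z0‖)/(γ+α) + ‖z0 - J₁ z0‖) with hCud
  have hbu : ∀ k, ‖uu k‖ ≤ Cu := by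
    intro k
    have h5 : ‖uu k‖ = γ⁻¹ * ‖x k - J₁ (x k)‖ := by
      rw [huud]
      simp only []
      rw [norm_smul, Real.norm_eq_abs, abs_of_pos (inv_pos.2 hγ)]
    rw [h5, hCud]
    exact mul_le_mul_of_nonneg_left (hxpb k) (inv_pos.2 hγ).le
  set CJ := M + (γ*(M+‖z0‖)/(γ+α) + ‖z0 - J₁ z0‖) with hCJd
  have hbp : ∀ k, ‖J₁ (x k)‖ ≤ CJ := by
    intro k
    calc ‖J₁ (x k)‖ = ‖x k - (x k - J₁ (x k))‖ := by congr 1; abel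
      _ ≤ ‖x k‖ + ‖x k - J₁ (x k)‖ := norm_sub_le _ _
      _ ≤ CJ := by
          rw [hCJd]
          exact add_le_add (hbound k) (hxpb k)
  set Cη := (γ+δ)⁻¹*(2*(M + ‖z0‖)) with hCηd
  have hbuv : ∀ k, ‖uu k + vv k‖ ≤ Cη := by
    intro k
    rw [hηeq k, hCηd]
    exact mul_le_mul_of_nonneg_left (hsbound k) (inv_pos.2 hG).le
  set Cv := Cu + Cη with hCvd
  have hbv : ∀ k, ‖vv k‖ ≤ Cv := by
    intro k
    calc ‖vv k‖ = ‖(uu k + vv k) - uu k‖ := by congr 1; abel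
      _ ≤ ‖uu k + vv k‖ + ‖uu k‖ := norm_sub_le _ _
      _ ≤ Cv := by rw [hCvd]; linarith only [hbuv k, hbu k]
  have hQP : ∀ k, qq k - J₁ (x k) = -(δ • (uu k + vv k)) := by
    intro k
    rw [F2 k]
    abel
  -- two cases for the shadow convergence
  rcases eq_or_lt_of_le hαβ with hab0' | habpos
  · -- case α + β = 0 : Svaiter-type argument
    have hβα : β = -α := by linarith only [hab0']
    -- the inner-product vanishing facts (full sequence)
    have hT1 : Tendsto (fun k => ⟪J₁ (x k), uu k⟫_ℝ + ⟪qq k, vv k⟫_ℝ) atTop (𝓝 0) := by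
      have hform : ∀ k, ⟪J₁ (x k), uu k⟫_ℝ + ⟪qq k, vv k⟫_ℝ
          = ⟪J₁ (x k), uu k + vv k⟫_ℝ + ⟪vv k, qq k - J₁ (x k)⟫_ℝ := by
        intro k
        rw [inner_add_right, inner_sub_right, real_inner_comm (vv k) (qq k),
          real_inner_comm (vv k) (J₁ (x k))]
        ring
      simp_rw [hform]
      have ha' := inner_tendsto_zero hbp hη
      have hQPn : Tendsto (fun k => ‖qq k - J₁ (x k)‖) atTop (𝓝 0) := by
        have hf : ∀ k, ‖qq k - J₁ (x k)‖ = δ * ‖uu k + vv k‖ := by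
          intro k
          rw [hQP k, norm_neg, norm_smul, Real.norm_eq_abs, abs_of_pos hδ]
        simp_rw [hf]
        have h := hη.const_mul δ
        simpa using h
      have hb' := inner_tendsto_zero hbv hQPn
      have h := ha'.add hb'
      simpa using h
    have hT2 : Tendsto (fun k => ‖uu k‖^2 - ‖vv k‖^2) atTop (𝓝 0) := by
      have hform : ∀ k, ‖uu k‖^2 - ‖vv k‖^2 = ⟪uu k - vv k, uu k + vv k⟫_ℝ := by
        intro k
        rw [inner_sub_left, inner_add_right, inner_add_right,
          real_inner_self_eq_norm_sq, real_inner_self_eq_norm_sq,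
          real_inner_comm (uu k) (vv k)]
        ring
      simp_rw [hform]
      have hbd : ∀ k, ‖uu k - vv k‖ ≤ Cu + Cv := by
        intro k
        calc ‖uu k - vv k‖ ≤ ‖uu k‖ + ‖vv k‖ := norm_sub_le _ _
          _ ≤ Cu + Cv := add_le_add (hbu k) (hbv k)
      exact inner_tendsto_zero hbd hη
    intro t
    by_contra hcon
    obtain ⟨ε, hε, ψ, hψ, hsep⟩ := extract_of_not_tendsto _ _ hcon
    obtain ⟨θ, hθ, pw, hpw⟩ := weak_seq_compact (fun j => J₁ (x (ψ j))) CJ (fun j => hbp _)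
    set χ : ℕ → ℕ := ψ ∘ θ with hχd
    have hχm : StrictMono χ := hψ.comp hθ
    have hpwχ : ∀ t' : H, Tendsto (fun j => ⟪J₁ (x (χ j)), t'⟫_ℝ) atTop (𝓝 ⟪pw, t'⟫_ℝ) :=
      fun t' => hpw t'
    set uw := γ⁻¹ • (xs - pw) with huwdef
    have hxχ : ∀ t' : H, Tendsto (fun j => ⟪x (χ j), t'⟫_ℝ) atTop (𝓝 ⟪xs, t'⟫_ℝ) :=
      fun t' => (hxweak t').comp hχm.tendsto_atTop
    have hηχ : Tendsto (fun j => ‖uu (χ j) + vv (χ j)‖) atTop (𝓝 0) :=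
      hη.comp hχm.tendsto_atTop
    have htη : ∀ t' : H, Tendsto (fun j => ⟪uu (χ j) + vv (χ j), t'⟫_ℝ) atTop (𝓝 0) := by
      intro t'
      have h5 := inner_tendsto_zero (g := fun _ : ℕ => t') (C := ‖t'‖) (fun _ => le_rfl) hηχ
      simpa [real_inner_comm] using h5
    have huχ : ∀ t' : H, Tendsto (fun j => ⟪uu (χ j), t'⟫_ℝ) atTop (𝓝 ⟪uw, t'⟫_ℝ) := by
      intro t'
      have hform : ∀ j, ⟪uu (χ j), t'⟫_ℝ
          = γ⁻¹*(⟪x (χ j), t'⟫_ℝ - ⟪J₁ (x (χ j)), t'⟫_ℝ) := by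
        intro j
        rw [huud]
        simp only []
        rw [real_inner_smul_left, inner_sub_left]
      simp_rw [hform]
      have h7 := ((hxχ t').sub (hpwχ t')).const_mul γ⁻¹
      have hval : ⟪uw, t'⟫_ℝ = γ⁻¹*(⟪xs, t'⟫_ℝ - ⟪pw, t'⟫_ℝ) := by
        rw [huwdef, real_inner_smul_left, inner_sub_left]
      rw [hval]
      exact h7
    have hvχ : ∀ t' : H, Tendsto (fun j => ⟪vv (χ j), t'⟫_ℝ) atTop (𝓝 ⟪-uw, t'⟫_ℝ) := by
      intro t'
      have hform : ∀ j, ⟪vv (χ j), t'⟫_ℝ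
          = ⟪uu (χ j) + vv (χ j), t'⟫_ℝ - ⟪uu (χ j), t'⟫_ℝ := by
        intro j
        rw [← inner_sub_left]
        congr 1
        abel
      simp_rw [hform]
      have h7 := (htη t').sub (huχ t')
      have hval : ⟪-uw, t'⟫_ℝ = 0 - ⟪uw, t'⟫_ℝ := by
        rw [inner_neg_left]; ring
      rw [hval]
      exact h7
    have hqχ : ∀ t' : H, Tendsto (fun j => ⟪qq (χ j), t'⟫_ℝ) atTop (𝓝 ⟪pw, t'⟫_ℝ) := by
      intro t'
      have hform : ∀ j, ⟪qq (χ j), t'⟫_ℝ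
          = ⟪J₁ (x (χ j)), t'⟫_ℝ - δ*⟪uu (χ j) + vv (χ j), t'⟫_ℝ := by
        intro j
        rw [F2 (χ j), inner_sub_left, real_inner_smul_left]
      simp_rw [hform]
      have h7 := (hpwχ t').sub ((htη t').const_mul δ)
      simpa using h7
    -- the limiting comonotonicity inequality
    have hΨ : ∀ y a y' b : H, a ∈ A y → b ∈ B y' →
        0 ≤ (⟪pw - y, uw - a⟫_ℝ - α*‖uw - a‖^2)
          + (⟪pw - y', -uw - b⟫_ℝ - β*‖-uw - b‖^2) := by
      intro y a y' b ha hb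
      set Φ : ℕ → ℝ := fun k => (⟪J₁ (x k) - y, uu k - a⟫_ℝ - α*‖uu k - a‖^2)
          + (⟪qq k - y', vv k - b⟫_ℝ - β*‖vv k - b‖^2) with hΦdef
      have hΦ0 : ∀ k, 0 ≤ Φ k := by
        intro k
        have h1 := hA (J₁ (x k)) (uu k) y a (huuA k) ha
        have h2 := hB (qq k) (vv k) y' b (hvvB k) hb
        simp only [hΦdef]
        linarith only [h1, h2]
      have hdec : ∀ k, Φ k =
          ((⟪J₁ (x k), uu k⟫_ℝ + ⟪qq k, vv k⟫_ℝ) - α*(‖uu k‖^2 - ‖vv k‖^2))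
          + ((-(⟪J₁ (x k), a⟫_ℝ) - ⟪y, uu k⟫_ℝ + ⟪y, a⟫_ℝ
              - ⟪qq k, b⟫_ℝ - ⟪y', vv k⟫_ℝ + ⟪y', b⟫_ℝ)
             + (2*α*⟪uu k, a⟫_ℝ - α*‖a‖^2 + 2*β*⟪vv k, b⟫_ℝ - β*‖b‖^2)) := by
        intro k
        simp only [hΦdef]
        simp only [inner_sub_left, inner_sub_right, norm_sub_sq_real]
        rw [hβα]
        ring
      have hGlim : Tendsto (fun j =>
          ((-(⟪J₁ (x (χ j)), a⟫_ℝ) - ⟪y, uu (χ j)⟫_ℝ + ⟪y, a⟫_ℝ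
              - ⟪qq (χ j), b⟫_ℝ - ⟪y', vv (χ j)⟫_ℝ + ⟪y', b⟫_ℝ)
             + (2*α*⟪uu (χ j), a⟫_ℝ - α*‖a‖^2 + 2*β*⟪vv (χ j), b⟫_ℝ - β*‖b‖^2)))
          atTop (𝓝 (((-(⟪pw, a⟫_ℝ) - ⟪y, uw⟫_ℝ + ⟪y, a⟫_ℝ
              - ⟪pw, b⟫_ℝ - ⟪y', -uw⟫_ℝ + ⟪y', b⟫_ℝ)
             + (2*α*⟪uw, a⟫_ℝ - α*‖a‖^2 + 2*β*⟪-uw, b⟫_ℝ - β*‖b‖^2)))) := by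
        have fu : Tendsto (fun j => ⟪y, uu (χ j)⟫_ℝ) atTop (𝓝 ⟪y, uw⟫_ℝ) := by
          have h7 := huχ y
          have hc1' : ∀ j, ⟪y, uu (χ j)⟫_ℝ = ⟪uu (χ j), y⟫_ℝ := fun j => real_inner_comm _ _
          simp_rw [hc1', real_inner_comm y uw] at *
          exact h7
        have fv : Tendsto (fun j => ⟪y', vv (χ j)⟫_ℝ) atTop (𝓝 ⟪y', -uw⟫_ℝ) := by
          have h7 := hvχ y'
          have hc1' : ∀ j, ⟪y', vv (χ j)⟫_ℝ = ⟪vv (χ j), y'⟫_ℝ := fun j => real_inner_comm _ _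
          simp_rw [hc1', real_inner_comm y' (-uw)] at *
          exact h7
        exact (((((((hpwχ a).neg.sub fu).add_const (⟪y, a⟫_ℝ)).sub (hqχ b)).sub fv).add_const
          (⟪y', b⟫_ℝ)).add
          (((((huχ a).const_mul (2*α)).sub_const (α*‖a‖^2)).add
            ((hvχ b).const_mul (2*β))).sub_const (β*‖b‖^2)))
      have hT1χ := hT1.comp hχm.tendsto_atTop
      have hT2χ := hT2.comp hχm.tendsto_atTop
      have hΦlim : Tendsto (fun j => Φ (χ j)) atTop (𝓝 ((0 - α*0)
          + (((-(⟪pw, a⟫_ℝ) - ⟪y, uw⟫_ℝ + ⟪y, a⟫_ℝ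
              - ⟪pw, b⟫_ℝ - ⟪y', -uw⟫_ℝ + ⟪y', b⟫_ℝ)
             + (2*α*⟪uw, a⟫_ℝ - α*‖a‖^2 + 2*β*⟪-uw, b⟫_ℝ - β*‖b‖^2))))) := by
        simp_rw [hdec]
        exact (hT1χ.sub (hT2χ.const_mul α)).add hGlim
      have hΨ0 := ge_of_tendsto' hΦlim (fun j => hΦ0 (χ j))
      have hident : (⟪pw - y, uw - a⟫_ℝ - α*‖uw - a‖^2)
          + (⟪pw - y', -uw - b⟫_ℝ - β*‖-uw - b‖^2)
          = (0 - α*0) + (((-(⟪pw, a⟫_ℝ) - ⟪y, uw⟫_ℝ + ⟪y, a⟫_ℝ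
              - ⟪pw, b⟫_ℝ - ⟪y', -uw⟫_ℝ + ⟪y', b⟫_ℝ)
             + (2*α*⟪uw, a⟫_ℝ - α*‖a‖^2 + 2*β*⟪-uw, b⟫_ℝ - β*‖b‖^2))) := by
        simp only [inner_sub_left, inner_sub_right, norm_sub_sq_real, inner_neg_left,
          inner_neg_right, norm_neg]
        rw [hβα]
        ring
      rw [hident]
      exact hΨ0
    -- maximality gives graph membership at the weak limit
    have hAuw : uw ∈ A pw := by
      refine insert_mem A α hA hAmax pw uw ?_
      intro y a ha
      set w' := pw - δ • uw with hw'def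
      set b := δ⁻¹ • (w' - J₂ w') with hbdef
      have hbB : b ∈ B (J₂ w') := memB w'
      have h := hΨ y a (J₂ w') b ha hbB
      have hpwsum : pw = δ • uw + w' := by rw [hw'def]; abel
      have hpwy' : pw - J₂ w' = δ • (uw + b) := by
        have e : δ • b = w' - J₂ w' := by rw [hbdef]; exact smul_inv_smul₀ hδ.ne' _
        rw [smul_add, e, hpwsum]
        abel
      have hBle : ⟪pw - J₂ w', -uw - b⟫_ℝ - β*‖-uw - b‖^2 ≤ 0 := by
        rw [hpwy', show -uw - b = -(uw + b) by abel, inner_neg_right, real_inner_smul_left,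
          real_inner_self_eq_norm_sq, norm_neg]
        have h8 : 0 ≤ (δ+β)*‖uw + b‖^2 := mul_nonneg hδβ.le (sq_nonneg _)
        linarith only [h8]
      linarith only [h, hBle]
    have hBuw : -uw ∈ B pw := by
      refine insert_mem B β hB hBmax pw (-uw) ?_
      intro y' b hb
      set w' := pw + γ • uw with hw'def
      set a := γ⁻¹ • (w' - J₁ w') with hadef
      have haA : a ∈ A (J₁ w') := memA w'
      have h := hΨ (J₁ w') a y' b haA hb
      have hpwsum : pw = w' - γ • uw := by rw [hw'def]; abel
      have hpwy : pw - J₁ w' = γ • (a - uw) := by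
        have e : γ • a = w' - J₁ w' := by rw [hadef]; exact smul_inv_smul₀ hγ.ne' _
        rw [smul_sub, e, hpwsum]
        abel
      have hAle : ⟪pw - J₁ w', uw - a⟫_ℝ - α*‖uw - a‖^2 ≤ 0 := by
        rw [hpwy, show uw - a = -(a - uw) by abel, inner_neg_right, real_inner_smul_left,
          real_inner_self_eq_norm_sq, norm_neg]
        have h8 : 0 ≤ (γ+α)*‖a - uw‖^2 := mul_nonneg hγα.le (sq_nonneg _)
        linarith only [h8]
      linarith only [h, hAle]
    have hpwfix : pw = J₁ xs := by
      refine uniqJ₁ xs pw ?_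
      rw [show γ⁻¹ • (xs - pw) = uw from huwdef.symm]
      exact hAuw
    have hcv := hpwχ t
    rw [hpwfix] at hcv
    have habs : Tendsto (fun j => |⟪J₁ (x (χ j)), t⟫_ℝ - ⟪J₁ xs, t⟫_ℝ|) atTop (𝓝 0) := by
      have h := (hcv.sub_const ⟪J₁ xs, t⟫_ℝ).abs
      simpa using h
    have h0' : ε ≤ 0 := ge_of_tendsto' habs (fun j => hsep (θ j))
    linarith only [h0', hε]
  · -- case 0 < α + β : strong convergence of the governing sequence
    set us := γ⁻¹ • (xs - J₁ xs) with husdef2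
    have heγs : γ • us = xs - J₁ xs := smul_inv_smul₀ hγ.ne' _
    have hAk : ∀ k, α*‖uu k - us‖^2 ≤ ⟪J₁ (x k) - J₁ xs, uu k - us⟫_ℝ :=
      fun k => hA _ _ _ _ (huuA k) husA
    have hBk : ∀ k, β*‖vv k + us‖^2 ≤ ⟪qq k - J₁ xs, vv k + us⟫_ℝ := by
      intro k
      have h := hB (qq k) (vv k) (J₁ xs) (-us) (hvvB k) hBmem
      have e : vv k - -us = vv k + us := by abel
      rw [e] at h
      exact h
    set C5 := (CJ + ‖J₁ xs‖) + δ*(Cv + ‖us‖) with hC5d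
    set C6 := C5 + |β| * (Cη + 2*(Cu + ‖us‖)) with hC6d
    have hstep : ∀ k, (α+β)*‖uu k - us‖^2 ≤ C6*‖uu k + vv k‖ := by
      intro k
      have h1 := hAk k
      have h2 := hBk k
      have hiden : ⟪J₁ (x k) - J₁ xs, uu k - us⟫_ℝ + ⟪qq k - J₁ xs, vv k + us⟫_ℝ
          = ⟪J₁ (x k) - J₁ xs, uu k + vv k⟫_ℝ + ⟪qq k - J₁ (x k), vv k + us⟫_ℝ := by
        have e : qq k - J₁ xs = (J₁ (x k) - J₁ xs) + (qq k - J₁ (x k)) := by abel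
        calc ⟪J₁ (x k) - J₁ xs, uu k - us⟫_ℝ + ⟪qq k - J₁ xs, vv k + us⟫_ℝ
            = ⟪J₁ (x k) - J₁ xs, uu k - us⟫_ℝ + (⟪J₁ (x k) - J₁ xs, vv k + us⟫_ℝ
              + ⟪qq k - J₁ (x k), vv k + us⟫_ℝ) := by rw [e, inner_add_left]
          _ = ⟪J₁ (x k) - J₁ xs, (uu k - us) + (vv k + us)⟫_ℝ
              + ⟪qq k - J₁ (x k), vv k + us⟫_ℝ := by
                rw [show ⟪J₁ (x k) - J₁ xs, (uu k - us) + (vv k + us)⟫_ℝ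
                  = ⟪J₁ (x k) - J₁ xs, uu k - us⟫_ℝ + ⟪J₁ (x k) - J₁ xs, vv k + us⟫_ℝ
                  from inner_add_right _ _ _]
                ring
          _ = _ := by rw [show (uu k - us) + (vv k + us) = uu k + vv k by abel]
      have hb1 : ⟪J₁ (x k) - J₁ xs, uu k + vv k⟫_ℝ ≤ (CJ + ‖J₁ xs‖) * ‖uu k + vv k‖ := by
        refine le_trans (real_inner_le_norm _ _) ?_
        refine mul_le_mul_of_nonneg_right ?_ (norm_nonneg _)
        calc ‖J₁ (x k) - J₁ xs‖ ≤ ‖J₁ (x k)‖ + ‖J₁ xs‖ := norm_sub_le _ _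
          _ ≤ CJ + ‖J₁ xs‖ := add_le_add (hbp k) le_rfl
      have hb2 : ⟪qq k - J₁ (x k), vv k + us⟫_ℝ ≤ δ*(Cv + ‖us‖)*‖uu k + vv k‖ := by
        rw [hQP k, inner_neg_left, real_inner_smul_left]
        have h3 : |⟪uu k + vv k, vv k + us⟫_ℝ| ≤ ‖uu k + vv k‖*(Cv + ‖us‖) := by
          refine le_trans (abs_real_inner_le_norm _ _) ?_
          refine mul_le_mul_of_nonneg_left ?_ (norm_nonneg _)
          calc ‖vv k + us‖ ≤ ‖vv k‖ + ‖us‖ := norm_add_le _ _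
            _ ≤ Cv + ‖us‖ := add_le_add (hbv k) le_rfl
        calc -(δ*⟪uu k + vv k, vv k + us⟫_ℝ) = δ*(-(⟪uu k + vv k, vv k + us⟫_ℝ)) := by ring
          _ ≤ δ*|⟪uu k + vv k, vv k + us⟫_ℝ| :=
              mul_le_mul_of_nonneg_left (neg_le_abs _) hδ.le
          _ ≤ δ*(‖uu k + vv k‖*(Cv + ‖us‖)) := mul_le_mul_of_nonneg_left h3 hδ.le
          _ = δ*(Cv + ‖us‖)*‖uu k + vv k‖ := by ring
      have hexp : ‖vv k + us‖^2 = ‖uu k + vv k‖^2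
          - 2*⟪uu k + vv k, uu k - us⟫_ℝ + ‖uu k - us‖^2 := by
        rw [show vv k + us = (uu k + vv k) - (uu k - us) by abel, norm_sub_sq_real]
      have p2 : β*‖vv k + us‖^2 = β*‖uu k - us‖^2
          + β*(‖uu k + vv k‖^2 - 2*⟪uu k + vv k, uu k - us⟫_ℝ) := by
        rw [hexp]; ring
      have hcr : |⟪uu k + vv k, uu k - us⟫_ℝ| ≤ (Cu + ‖us‖)*‖uu k + vv k‖ := by
        refine le_trans (abs_real_inner_le_norm _ _) ?_
        calc ‖uu k + vv k‖*‖uu k - us‖ ≤ ‖uu k + vv k‖*(Cu + ‖us‖) := by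
              refine mul_le_mul_of_nonneg_left ?_ (norm_nonneg _)
              calc ‖uu k - us‖ ≤ ‖uu k‖ + ‖us‖ := norm_sub_le _ _
                _ ≤ Cu + ‖us‖ := add_le_add (hbu k) le_rfl
          _ = (Cu + ‖us‖)*‖uu k + vv k‖ := by ring
      have q1 : ‖uu k + vv k‖^2 ≤ Cη*‖uu k + vv k‖ := by
        calc ‖uu k + vv k‖^2 = ‖uu k + vv k‖*‖uu k + vv k‖ := by ring
          _ ≤ Cη*‖uu k + vv k‖ := mul_le_mul_of_nonneg_right (hbuv k) (norm_nonneg _)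
      have q2 : |‖uu k + vv k‖^2 - 2*⟪uu k + vv k, uu k - us⟫_ℝ|
          ≤ Cη*‖uu k + vv k‖ + 2*((Cu + ‖us‖)*‖uu k + vv k‖) := by
        have t1' : |‖uu k + vv k‖^2 - 2*⟪uu k + vv k, uu k - us⟫_ℝ|
            ≤ |‖uu k + vv k‖^2| + |2*⟪uu k + vv k, uu k - us⟫_ℝ| := abs_sub _ _
        have t2' : |‖uu k + vv k‖^2| = ‖uu k + vv k‖^2 := abs_of_nonneg (sq_nonneg _)
        have t3' : |2*⟪uu k + vv k, uu k - us⟫_ℝ| = 2*|⟪uu k + vv k, uu k - us⟫_ℝ| := by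
          rw [abs_mul]
          norm_num
        rw [t2', t3'] at t1'
        have := hcr
        linarith only [t1', q1, hcr]
      have p3 : -(|β| * (Cη*‖uu k + vv k‖ + 2*((Cu + ‖us‖)*‖uu k + vv k‖)))
          ≤ β*(‖uu k + vv k‖^2 - 2*⟪uu k + vv k, uu k - us⟫_ℝ) := by
        have t4' := neg_abs_le (β*(‖uu k + vv k‖^2 - 2*⟪uu k + vv k, uu k - us⟫_ℝ))
        have t5' : |β*(‖uu k + vv k‖^2 - 2*⟪uu k + vv k, uu k - us⟫_ℝ)|
            ≤ |β| * (Cη*‖uu k + vv k‖ + 2*((Cu + ‖us‖)*‖uu k + vv k‖)) := by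
          rw [abs_mul]
          exact mul_le_mul_of_nonneg_left q2 (abs_nonneg β)
        linarith only [t4', t5']
      have p1 : α*‖uu k - us‖^2 + β*‖vv k + us‖^2
          ≤ (CJ + ‖J₁ xs‖)*‖uu k + vv k‖ + δ*(Cv + ‖us‖)*‖uu k + vv k‖ := by
        have := hiden
        linarith only [h1, h2, hiden ▸ (add_le_add hb1 hb2), hb1, hb2]
      rw [hC6d, hC5d]
      linarith only [p1, p2, p3]
    have hsq2 : Tendsto (fun k => ‖uu k - us‖^2) atTop (𝓝 0) := by
      have hg : Tendsto (fun k => (C6/(α+β))*‖uu k + vv k‖) atTop (𝓝 0) := by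
        have h := hη.const_mul (C6/(α+β))
        simpa using h
      refine squeeze_zero (fun k => sq_nonneg _) (fun k => ?_) hg
      have h := hstep k
      rw [div_mul_eq_mul_div, le_div_iff₀ habpos]
      linarith only [h]
    have hstrong : Tendsto (fun k => ‖uu k - us‖) atTop (𝓝 0) := by
      have h4 : Tendsto (fun k => Real.sqrt (‖uu k - us‖^2)) atTop (𝓝 (Real.sqrt 0)) :=
        (Real.continuous_sqrt.tendsto 0).comp hsq2
      have h5 : (fun k => Real.sqrt (‖uu k - us‖^2)) = fun k => ‖uu k - us‖ :=
        funext fun k => Real.sqrt_sq (norm_nonneg _)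
      rwa [h5, Real.sqrt_zero] at h4
    intro t
    have hut : Tendsto (fun k => ⟪uu k, t⟫_ℝ) atTop (𝓝 ⟪us, t⟫_ℝ) := by
      have h5 := inner_tendsto_zero (g := fun _ : ℕ => t) (C := ‖t‖) (fun _ => le_rfl) hstrong
      have h6 : ∀ k, ⟪t, uu k - us⟫_ℝ = ⟪uu k, t⟫_ℝ - ⟪us, t⟫_ℝ := by
        intro k
        rw [inner_sub_right, real_inner_comm t (uu k), real_inner_comm t us]
      simp_rw [h6] at h5
      have h7 := h5.add_const ⟪us, t⟫_ℝ
      simpa using h7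
    have hdecomp : ∀ k, ⟪J₁ (x k), t⟫_ℝ = ⟪x k, t⟫_ℝ - γ*⟪uu k, t⟫_ℝ := by
      intro k
      have e : J₁ (x k) = x k - γ • uu k := by rw [eγ k]; abel
      rw [e, inner_sub_left, real_inner_smul_left]
    have hval : ⟪J₁ xs, t⟫_ℝ = ⟪xs, t⟫_ℝ - γ*⟪us, t⟫_ℝ := by
      have e : J₁ xs = xs - γ • us := by rw [heγs]; abel
      rw [e, inner_sub_left, real_inner_smul_left]
    simp_rw [hdecomp]
    rw [hval]
    exact (hxweak t).sub (hut.const_mul γ)
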